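/- Let α' ∈ (0,1), λ > 0, t > 0 and u ∈ [0,1]. Then the probability generating function of the space fractional Poisson process satisfies ∑_{n=0}^∞ u^n p_{α'}(n|t,λ) = exp(−t λ^{α'} (1−u)^{α'}). -/

import Mathlib

open Real

/-- pmf of the space fractional Poisson process.  The ratio
`Γ(kα'+1)/Γ(kα'+1-n)` is interpreted as `0` when `kα'+1-n` is a nonpositive
integer, which is automatic since Mathlib's `Real.Gamma` vanishes at
nonpositive integers and division by zero yields zero. -/
noncomputable def sfppPMF (α' lam t : ℝ) (n : ℕ) : ℝ :=
  (-1 : ℝ) ^ n / n.factorial *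
    ∑' k : ℕ, (-(lam ^ α' * t)) ^ k / k.factorial *
      (Real.Gamma ((k : ℝ) * α' + 1) / Real.Gamma ((k : ℝ) * α' + 1 - n))


open Filter Finset


noncomputable def dsc (z : ℝ) (n : ℕ) : ℝ := ∏ j ∈ Finset.range n, (z - j)

noncomputable def binC (z : ℝ) (n : ℕ) : ℝ := dsc z n / n.factorial

lemma dsc_zero (z : ℝ) : dsc z 0 = 1 := by simp [dsc]

lemma dsc_succ (z : ℝ) (n : ℕ) : dsc z (n + 1) = dsc z n * (z - n) := by
  simp [dsc, Finset.prod_range_succ]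

lemma dsc_succ' (z : ℝ) (n : ℕ) : dsc z (n + 1) = z * dsc (z - 1) n := by
  rw [dsc, Finset.prod_range_succ']
  simp only [Nat.cast_zero, sub_zero, dsc]
  rw [mul_comm]
  congr 1
  apply Finset.prod_congr rfl
  intro j _
  push_cast
  ring

lemma binC_zero (z : ℝ) : binC z 0 = 1 := by simp [binC, dsc_zero]

lemma binC_succ (z : ℝ) (n : ℕ) : binC z (n + 1) = binC z n * ((z - n) / (n + 1)) := by
  have hn : ((n.factorial : ℝ)) ≠ 0 := Nat.cast_ne_zero.2 n.factorial_ne_zero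
  have hn1 : ((n : ℝ) + 1) ≠ 0 := by positivity
  simp only [binC, dsc_succ, Nat.factorial_succ]
  push_cast
  rw [div_mul_div_comm, mul_comm ((n : ℝ) + 1) (n.factorial : ℝ)]

lemma binC_pascal (z : ℝ) (n : ℕ) :
    binC z (n + 1) = binC (z - 1) (n + 1) + binC (z - 1) n := by
  have h1 : dsc z (n + 1) = z * dsc (z - 1) n := dsc_succ' z n
  have h2 : dsc (z - 1) (n + 1) = dsc (z - 1) n * (z - 1 - n) := dsc_succ (z - 1) n
  simp only [binC, h1, h2, Nat.factorial_succ]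
  have hn : ((n.factorial : ℝ)) ≠ 0 := Nat.cast_ne_zero.2 n.factorial_ne_zero
  have : (((n + 1) * n.factorial : ℕ) : ℝ) = (n + 1) * n.factorial := by push_cast; ring
  rw [this]
  field_simp
  ring

-- (n+1) * binC z (n+1) = (z - n) * binC z n
lemma succ_mul_binC (z : ℝ) (n : ℕ) :
    ((n : ℝ) + 1) * binC z (n + 1) = (z - n) * binC z n := by
  rw [binC_succ]
  field_simp

lemma abs_binC_eq (z : ℝ) (n : ℕ) :
    |binC z n| = ∏ j ∈ Finset.range n, (|z - j| / (j + 1)) := by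
  have hfac : (n.factorial : ℝ) = ∏ j ∈ Finset.range n, ((j : ℝ) + 1) := by
    rw [← Finset.prod_range_add_one_eq_factorial]
    push_cast
    rfl
  rw [binC, dsc, abs_div, Finset.abs_prod]
  rw [abs_of_pos (by positivity : (0:ℝ) < (n.factorial : ℝ)), hfac,
    ← Finset.prod_div_distrib]

lemma abs_binC_le (z : ℝ) (hz : 0 ≤ z) (n : ℕ) : |binC z n| ≤ Real.exp z := by
  set M := ⌈z⌉₊ with hM
  set J := min M n with hJ
  have h1 : |binC z n| ≤ ∏ j ∈ Finset.range n, (if j < M then z / (j + 1) else 1) := by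
    rw [abs_binC_eq]
    apply Finset.prod_le_prod
    · intro j _; positivity
    · intro j _
      by_cases h : j < M
      · simp only [h, if_true]
        apply div_le_div_of_nonneg_right ?_ (by positivity)
        · rcases abs_sub_le_iff.1 (le_refl |z - (j:ℝ)|) with _
          have : (j : ℝ) < z := Nat.lt_ceil.1 h
          rw [abs_of_pos (by linarith)]
          have : (0:ℝ) ≤ j := Nat.cast_nonneg j
          linarith
      · simp only [h, if_false]
        have hjz : z ≤ (j : ℝ) := by
          have := Nat.ceil_le.1 (Nat.le_of_not_lt h)
          exact this
        rw [abs_of_nonpos (by linarith), div_le_one (by positivity)]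
        linarith
  have h2 : (∏ j ∈ Finset.range n, (if j < M then z / (j + 1) else 1))
      = ∏ j ∈ Finset.range J, (z / (j + 1)) := by
    rw [← Finset.prod_filter]
    congr 1
    ext j
    simp only [Finset.mem_filter, Finset.mem_range, hJ, lt_min_iff, and_comm]
  have h3 : (∏ j ∈ Finset.range J, (z / ((j:ℝ) + 1))) = z ^ J / J.factorial := by
    rw [Finset.prod_div_distrib, Finset.prod_const, Finset.card_range]
    congr 1
    rw [← Finset.prod_range_add_one_eq_factorial]
    push_cast
    rfl
  calc |binC z n| ≤ _ := h1
    _ = _ := h2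
    _ = z ^ J / J.factorial := h3
    _ ≤ Real.exp z := Real.pow_div_factorial_le_exp (x := z) hz J

lemma gamma_ratio (z : ℝ) (hz : 0 ≤ z) (n : ℕ) :
    Real.Gamma (z + 1) / Real.Gamma (z + 1 - n) = dsc z n := by
  induction n with
  | zero =>
    simp only [Nat.cast_zero, sub_zero, dsc_zero]
    exact div_self (ne_of_gt (Real.Gamma_pos_of_pos (by linarith)))
  | succ n ih =>
    have hcast : z + 1 - ((n + 1 : ℕ) : ℝ) = z - n := by push_cast; ring
    rw [dsc_succ, ← ih, hcast]
    by_cases hzn : z - (n : ℝ) = 0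
    · rw [hzn, Real.Gamma_zero, div_zero, mul_zero]
    · have h1 : Real.Gamma (z + 1 - n) = (z - n) * Real.Gamma (z - n) := by
        have h : z + 1 - (n : ℝ) = (z - n) + 1 := by ring
        rw [h, Real.Gamma_add_one hzn]
      by_cases h0 : Real.Gamma (z - (n : ℝ)) = 0
      · rw [h0, div_zero, h1, h0, mul_zero, div_zero, zero_mul]
      · rw [h1]
        field_simp

section TailBound

variable {z : ℝ}

/-- tail product -/
noncomputable def tailQ (z : ℝ) (M n : ℕ) : ℝ :=
  ∏ j ∈ Finset.Ico M n, (((j : ℝ) - z) / (j + 1))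

lemma tailQ_self (z : ℝ) (M : ℕ) : tailQ z M M = 1 := by simp [tailQ]

lemma tailQ_succ (z : ℝ) {M n : ℕ} (h : M ≤ n) :
    tailQ z M (n + 1) = tailQ z M n * (((n : ℝ) - z) / (n + 1)) := by
  rw [tailQ, Finset.prod_Ico_succ_top h, tailQ]

lemma tailQ_nonneg {M n : ℕ} (hM : z ≤ M) : 0 ≤ tailQ z M n := by
  apply Finset.prod_nonneg
  intro j hj
  have hj' : M ≤ j := (Finset.mem_Ico.1 hj).1
  have hzj : z ≤ (j : ℝ) := hM.trans (by exact_mod_cast hj')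
  apply div_nonneg (by linarith) (by positivity)

lemma tailQ_key (hz : 0 < z) {M : ℕ} (hM : z ≤ M) :
    ∀ N, M ≤ N → z * (∑ n ∈ Finset.Ico M N, tailQ z M n) + N * tailQ z M N = M := by
  intro N hN
  induction N, hN using Nat.le_induction with
  | base => simp [tailQ_self]
  | succ N hN ih =>
    rw [Finset.sum_Ico_succ_top hN, tailQ_succ z hN]
    have hN' : ((N : ℝ) + 1) ≠ 0 := by positivity
    push_cast
    field_simp
    nlinarith [ih]

lemma tailQ_sum_le (hz : 0 < z) {M : ℕ} (hM : z ≤ M) (N : ℕ) :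
    ∑ n ∈ Finset.Ico M N, tailQ z M n ≤ M / z := by
  rcases le_or_gt N M with h | h
  · rw [Finset.Ico_eq_empty (by omega)]
    simp only [Finset.sum_empty]
    positivity
  · have key := tailQ_key hz hM N h.le
    have h1 : (0:ℝ) ≤ N * tailQ z M N := by
      have := tailQ_nonneg (z := z) (n := N) hM
      positivity
    rw [le_div_iff₀ hz, mul_comm]
    linarith

lemma abs_binC_eq_tailQ {M : ℕ} (hM : z ≤ M) :
    ∀ n, M ≤ n → |binC z n| = |binC z M| * tailQ z M n := by
  intro n hn
  induction n, hn using Nat.le_induction with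
  | base => simp [tailQ_self]
  | succ n hn ih =>
    have hzn : z ≤ (n : ℝ) := hM.trans (by exact_mod_cast hn)
    rw [binC_succ, abs_mul, ih, tailQ_succ z hn, abs_div,
      abs_of_nonpos (by linarith : z - (n:ℝ) ≤ 0),
      abs_of_pos (by positivity : (0:ℝ) < (n:ℝ) + 1), mul_assoc, neg_sub]

lemma sum_range_abs_binC_le (hz : 0 < z) (N : ℕ) :
    ∑ n ∈ Finset.range N, |binC z n|
      ≤ (⌈z⌉₊ + 1) * Real.exp z + Real.exp z * (⌈z⌉₊ / z) := by
  set M := ⌈z⌉₊ with hMdef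
  have hM : z ≤ M := Nat.le_ceil z
  have hQex : (0:ℝ) ≤ Real.exp z * (M / z) := by positivity
  have hterm : ∀ n, |binC z n| ≤ Real.exp z := fun n => abs_binC_le z hz.le n
  rcases le_or_gt N (M + 1) with h | h
  · calc ∑ n ∈ Finset.range N, |binC z n| ≤ ∑ n ∈ Finset.range N, Real.exp z :=
          Finset.sum_le_sum fun n _ => hterm n
      _ = N * Real.exp z := by rw [Finset.sum_const, Finset.card_range]; ring
      _ ≤ (M + 1) * Real.exp z := by
          have : (N : ℝ) ≤ M + 1 := by exact_mod_cast h
          have := Real.exp_pos z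
          nlinarith
      _ ≤ (M + 1) * Real.exp z + Real.exp z * (M / z) := by linarith
  · have hsplit : ∑ n ∈ Finset.range N, |binC z n|
        = ∑ n ∈ Finset.range (M + 1), |binC z n| + ∑ n ∈ Finset.Ico (M + 1) N, |binC z n| := by
      exact (Finset.sum_range_add_sum_Ico _ (by omega : M + 1 ≤ N)).symm
    have h1 : ∑ n ∈ Finset.range (M + 1), |binC z n| ≤ (M + 1) * Real.exp z := by
      calc ∑ n ∈ Finset.range (M + 1), |binC z n| ≤ ∑ n ∈ Finset.range (M + 1), Real.exp z :=
            Finset.sum_le_sum fun n _ => hterm n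
        _ = (M + 1) * Real.exp z := by
            rw [Finset.sum_const, Finset.card_range]; push_cast; ring
    have h2 : ∑ n ∈ Finset.Ico (M + 1) N, |binC z n| ≤ Real.exp z * (M / z) := by
      have he : ∀ n ∈ Finset.Ico (M + 1) N, |binC z n| = |binC z M| * tailQ z M n := by
        intro n hn
        exact abs_binC_eq_tailQ (z := z) hM n (by have := (Finset.mem_Ico.1 hn).1; omega)
      rw [Finset.sum_congr rfl he, ← Finset.mul_sum]
      have hsub : ∑ n ∈ Finset.Ico (M + 1) N, tailQ z M n ≤ M / z := by
        refine le_trans ?_ (tailQ_sum_le hz hM N)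
        have : Finset.Ico (M+1) N ⊆ Finset.Ico M N := by
          apply Finset.Ico_subset_Ico <;> omega
        apply Finset.sum_le_sum_of_subset_of_nonneg this
        intro i _ _
        exact tailQ_nonneg (z := z) hM
      have hb : |binC z M| ≤ Real.exp z := hterm M
      have hQnn : (0:ℝ) ≤ ∑ n ∈ Finset.Ico (M + 1) N, tailQ z M n :=
        Finset.sum_nonneg fun i _ => tailQ_nonneg (z := z) hM
      calc |binC z M| * (∑ n ∈ Finset.Ico (M + 1) N, tailQ z M n)
          ≤ Real.exp z * (∑ n ∈ Finset.Ico (M + 1) N, tailQ z M n) := by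
            apply mul_le_mul_of_nonneg_right hb hQnn
        _ ≤ Real.exp z * (M / z) := by
            apply mul_le_mul_of_nonneg_left hsub (Real.exp_pos z).le
    linarith [hsplit, h1, h2]

lemma summable_abs_binC (hz : 0 < z) : Summable (fun n => |binC z n|) :=
  summable_of_sum_range_le (fun n => abs_nonneg _) (sum_range_abs_binC_le hz)

lemma tsum_abs_binC_le (hz : 0 < z) :
    ∑' n, |binC z n| ≤ (⌈z⌉₊ + 1) * Real.exp z + Real.exp z * (⌈z⌉₊ / z) :=
  tsum_le_of_sum_range_le (fun n => abs_nonneg _) (sum_range_abs_binC_le hz)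

end TailBound

lemma tendsto_binC_zero {w : ℝ} (hw : -1 < w) :
    Tendsto (fun N => binC w N) atTop (nhds 0) := by
  set N0 := ⌈max w 0⌉₊ with hN0def
  have hwN0 : w ≤ (N0 : ℝ) := (le_max_left w 0).trans (Nat.le_ceil _)
  set A := |binC w N0| with hAdef
  have hA : 0 ≤ A := abs_nonneg _
  set c := (w + 1) / (N0 + 1) with hcdef
  have hc : 0 < c := by
    apply div_pos (by linarith) (by positivity)
  set H : ℕ → ℝ := fun m => ∑ i ∈ Finset.range m, (1 : ℝ) / (i + 1) with hHdef
  -- the main bound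
  have key : ∀ m : ℕ, |binC w (N0 + m)| ≤ A * Real.exp (-(c * H m)) := by
    intro m
    have h1 : |binC w (N0 + m)| = A * tailQ w N0 (N0 + m) :=
      abs_binC_eq_tailQ (z := w) hwN0 _ (Nat.le_add_right _ _)
    have h2 : tailQ w N0 (N0 + m)
        ≤ Real.exp (-∑ j ∈ Finset.Ico N0 (N0 + m), (w + 1) / (j + 1)) := by
      rw [tailQ]
      have hstep : ∀ j ∈ Finset.Ico N0 (N0 + m),
          ((j : ℝ) - w) / (j + 1) ≤ Real.exp (-((w + 1) / (j + 1))) := by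
        intro j hj
        have hj1 : (0:ℝ) < (j:ℝ) + 1 := by positivity
        have heq : ((j : ℝ) - w) / (j + 1) = 1 + (-((w + 1) / (j + 1))) := by
          field_simp
          ring
        rw [heq]
        have := Real.add_one_le_exp (-((w + 1) / ((j:ℝ) + 1)))
        linarith
      calc ∏ j ∈ Finset.Ico N0 (N0 + m), (((j:ℝ) - w) / (j + 1))
          ≤ ∏ j ∈ Finset.Ico N0 (N0 + m), Real.exp (-((w + 1) / (j + 1))) := by
            apply Finset.prod_le_prod
            · intro j hj
              have hj' : N0 ≤ j := (Finset.mem_Ico.1 hj).1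
              have : w ≤ (j : ℝ) := hwN0.trans (by exact_mod_cast hj')
              apply div_nonneg (by linarith) (by positivity)
            · exact hstep
        _ = Real.exp (∑ j ∈ Finset.Ico N0 (N0 + m), -((w + 1) / (j + 1))) :=
            (Real.exp_sum _ _).symm
        _ = Real.exp (-∑ j ∈ Finset.Ico N0 (N0 + m), ((w + 1) / (j + 1))) := by
            rw [← Finset.sum_neg_distrib]
    have h3 : c * H m ≤ ∑ j ∈ Finset.Ico N0 (N0 + m), (w + 1) / (j + 1) := by
      rw [Finset.sum_Ico_eq_sum_range]
      simp only [Nat.add_sub_cancel_left]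
      rw [hHdef, Finset.mul_sum]
      apply Finset.sum_le_sum
      intro i _
      have hi1 : (0:ℝ) < (i:ℝ) + 1 := by positivity
      have hN01 : (0:ℝ) < (N0:ℝ) + 1 := by positivity
      have hcast : ((N0 + i : ℕ) : ℝ) = (N0 : ℝ) + i := by push_cast; ring
      rw [hcdef, hcast]
      rw [div_mul_div_comm, mul_one, div_le_div_iff₀ (by positivity) (by positivity)]
      have hw1 : (0:ℝ) ≤ w + 1 := by linarith
      nlinarith [mul_nonneg (mul_nonneg hw1 (Nat.cast_nonneg (α := ℝ) N0)) (Nat.cast_nonneg (α := ℝ) i)]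
    have h4 : Real.exp (-∑ j ∈ Finset.Ico N0 (N0 + m), (w + 1) / (j + 1))
        ≤ Real.exp (-(c * H m)) := by
      apply Real.exp_le_exp.2
      linarith
    calc |binC w (N0 + m)| = A * tailQ w N0 (N0 + m) := h1
      _ ≤ A * Real.exp (-(c * H m)) := by
          apply mul_le_mul_of_nonneg_left (h2.trans h4) hA
  -- the bound tends to zero
  have hHtop : Tendsto H atTop atTop := Real.tendsto_sum_range_one_div_nat_succ_atTop
  have hexp : Tendsto (fun m => A * Real.exp (-(c * H m))) atTop (nhds 0) := by
    have h5 : Tendsto (fun m => c * H m) atTop atTop := hHtop.const_mul_atTop hc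
    have h6 : Tendsto (fun m => -(c * H m)) atTop atBot := tendsto_neg_atTop_atBot.comp h5
    have h7 : Tendsto (fun m => Real.exp (-(c * H m))) atTop (nhds 0) :=
      Real.tendsto_exp_atBot.comp h6
    simpa using h7.const_mul A
  have hshift : Tendsto (fun m => binC w (N0 + m)) atTop (nhds 0) := by
    apply squeeze_zero_norm (fun m => ?_) hexp
    simpa [Real.norm_eq_abs] using key m
  have : Tendsto (fun m => binC w (m + N0)) atTop (nhds 0) := by
    apply hshift.congr
    intro m
    rw [Nat.add_comm]
  exact (Filter.tendsto_add_atTop_iff_nat N0).1 this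

lemma telescope_binC (z : ℝ) (N : ℕ) :
    ∑ n ∈ Finset.range (N + 1), (-1 : ℝ) ^ n * binC z n = (-1) ^ N * binC (z - 1) N := by
  induction N with
  | zero => simp [binC_zero]
  | succ N ih =>
    rw [Finset.sum_range_succ, ih, binC_pascal]
    ring

lemma summable_alt_binC {z : ℝ} (hz : 0 < z) :
    Summable (fun n => (-1 : ℝ) ^ n * binC z n) := by
  have h : Summable (fun n => |(-1 : ℝ) ^ n * binC z n|) := by
    have := summable_abs_binC hz
    apply this.congr
    intro n
    simp [abs_mul]
  exact h.of_abs

lemma tsum_alt_binC {z : ℝ} (hz : 0 < z) :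
    ∑' n, (-1 : ℝ) ^ n * binC z n = 0 := by
  have hs := summable_alt_binC hz
  have h1 : Tendsto (fun N => ∑ n ∈ Finset.range N, (-1 : ℝ) ^ n * binC z n) atTop
      (nhds (∑' n, (-1 : ℝ) ^ n * binC z n)) := hs.hasSum.tendsto_sum_nat
  have h2 : Tendsto (fun N => ∑ n ∈ Finset.range (N + 1), (-1 : ℝ) ^ n * binC z n) atTop
      (nhds (∑' n, (-1 : ℝ) ^ n * binC z n)) :=
    (Filter.tendsto_add_atTop_iff_nat 1).2 h1
  have h3 : Tendsto (fun N => (-1 : ℝ) ^ N * binC (z - 1) N) atTop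
      (nhds (∑' n, (-1 : ℝ) ^ n * binC z n)) := by
    apply h2.congr
    intro N
    exact telescope_binC z N
  have h4 : Tendsto (fun N => (-1 : ℝ) ^ N * binC (z - 1) N) atTop (nhds 0) := by
    have habs : Tendsto (fun N => |binC (z - 1) N|) atTop (nhds 0) := by
      have := (tendsto_binC_zero (w := z - 1) (by linarith)).abs
      simpa using this
    apply squeeze_zero_norm (fun N => ?_) habs
    rw [Real.norm_eq_abs, abs_mul, abs_pow, abs_neg, abs_one, one_pow, one_mul]
  exact tendsto_nhds_unique h3 h4

section ODE

variable {z : ℝ}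

/-- summability of the binomial series inside the unit interval -/
lemma summable_binC_geom (hz : 0 ≤ z) {y r : ℝ} (hr : r < 1) (hyr : |y| ≤ r) :
    Summable (fun n => binC z n * (-1) ^ n * y ^ n) := by
  have hr0 : 0 ≤ r := (abs_nonneg y).trans hyr
  apply Summable.of_norm_bounded
    ((summable_geometric_of_lt_one hr0 hr).mul_left (Real.exp z))
  intro n
  rw [norm_mul, norm_mul, norm_pow, norm_neg, norm_one, one_pow, mul_one, norm_pow]
  apply mul_le_mul (by simpa [Real.norm_eq_abs] using abs_binC_le z hz n)
    (pow_le_pow_left₀ (norm_nonneg y) (by simpa [Real.norm_eq_abs] using hyr) n)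
    (by positivity) (Real.exp_pos z).le

lemma deriv_bound_summable {r : ℝ} (hr0 : 0 < r) (hr : r < 1) :
    Summable (fun n : ℕ => Real.exp z * ((n : ℝ) * r ^ (n - 1))) := by
  apply Summable.mul_left
  have h1 : Summable (fun m : ℕ => ((m : ℝ) + 1) * r ^ m) := by
    have ha : Summable (fun m : ℕ => (m : ℝ) * r ^ m) := by
      have := summable_pow_mul_geometric_of_norm_lt_one 1 (by
        rw [Real.norm_eq_abs, abs_of_pos hr0]; exact hr)
      simpa using this
    have hb : Summable (fun m : ℕ => r ^ m) :=
      summable_geometric_of_lt_one hr0.le hr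
    simpa [add_mul, one_mul] using ha.add hb
  have h2 : Summable (fun m : ℕ => ((m + 1 : ℕ) : ℝ) * r ^ ((m + 1) - 1)) := by
    apply h1.congr
    intro m
    simp
  exact (summable_nat_add_iff 1).1 h2

lemma binC_tsum_eq_rpow (hz : 0 ≤ z) {x : ℝ} (hx0 : 0 ≤ x) (hx1 : x < 1) :
    ∑' n, binC z n * (-1) ^ n * x ^ n = (1 - x) ^ z := by
  set r := (1 + x) / 2 with hrdef
  have hr0 : 0 < r := by rw [hrdef]; linarith
  have hr1 : r < 1 := by rw [hrdef]; linarith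
  have hxr : x < r := by rw [hrdef]; linarith
  set s : Set ℝ := Set.Ioo (-r) r with hsdef
  set g : ℕ → ℝ → ℝ := fun n y => binC z n * (-1) ^ n * y ^ n with hgdef
  set g' : ℕ → ℝ → ℝ := fun n y => binC z n * (-1) ^ n * ((n : ℝ) * y ^ (n - 1)) with hg'def
  set f : ℝ → ℝ := fun y => ∑' n, g n y with hfdef
  have hmem : ∀ y : ℝ, y ∈ s → |y| < r := by
    intro y hy
    rw [abs_lt]
    exact ⟨hy.1, hy.2⟩
  have hgder : ∀ n : ℕ, ∀ y ∈ s, HasDerivAt (g n) (g' n y) y := by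
    intro n y _
    exact (hasDerivAt_pow n y).const_mul (binC z n * (-1) ^ n)
  have hbound : ∀ n : ℕ, ∀ y ∈ s, ‖g' n y‖ ≤ Real.exp z * ((n : ℝ) * r ^ (n - 1)) := by
    intro n y hy
    rw [hg'def]
    simp only [norm_mul, Real.norm_eq_abs, abs_pow, abs_neg, abs_one, one_pow, mul_one,
      Nat.abs_cast]
    apply mul_le_mul (abs_binC_le z hz n) ?_ (by positivity) (Real.exp_pos z).le
    apply mul_le_mul_of_nonneg_left ?_ (Nat.cast_nonneg n)
    exact pow_le_pow_left₀ (abs_nonneg y) (hmem y hy).le _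
  have hg0 : Summable (fun n => g n 0) := by
    apply summable_of_ne_finset_zero (s := {0})
    intro n hn
    have hn' : n ≠ 0 := by simpa using hn
    rw [hgdef]
    simp [zero_pow hn']
  have hder : ∀ y ∈ s, HasDerivAt f (∑' n, g' n y) y := by
    intro y hy
    exact hasDerivAt_tsum_of_isPreconnected (deriv_bound_summable hr0 hr1) isOpen_Ioo
      (convex_Ioo _ _).isPreconnected hgder hbound
      (show (0:ℝ) ∈ s by constructor <;> [linarith; linarith]) hg0 hy
  -- the ODE : (1 - y) * D y = -z * f y on s
  have hode : ∀ y ∈ s, (1 - y) * (∑' n, g' n y) = -z * f y := by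
    intro y hy
    have hyabs : |y| ≤ r := (hmem y hy).le
    have hSg : Summable (fun n => g n y) := summable_binC_geom hz hr1 hyabs
    have hSg' : Summable (fun n => g' n y) :=
      Summable.of_norm_bounded (deriv_bound_summable hr0 hr1) (fun n => hbound n y hy)
    -- D y = ∑' n, g' (n+1) y
    have hshift : ∑' n, g' n y = ∑' n, g' (n + 1) y := by
      rw [Summable.tsum_eq_zero_add hSg']
      simp [hg'def]
    -- g' (n+1) y = -z * g n y + n * binC z n * (-1)^n * y^n + z*... compute
    have hterm : ∀ n : ℕ, g' (n + 1) y = -z * g n y + y * g' n y := by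
      intro n
      rw [hg'def, hgdef]
      simp only
      have h1 : ((n : ℝ) + 1) * binC z (n + 1) = (z - n) * binC z n := succ_mul_binC z n
      have hcast : ((n + 1 : ℕ) : ℝ) = (n : ℝ) + 1 := by push_cast; ring
      rw [hcast]
      cases n with
      | zero =>
        rw [binC_succ, binC_zero]
        norm_num
      | succ m =>
        have hpow : y ^ (m + 1 + 1 - 1) = y ^ (m + 1) := rfl
        have hpow2 : (y : ℝ) ^ (m + 1 - 1) = y ^ m := rfl
        rw [hpow, hpow2]
        have hy1 : y ^ (m + 1) = y ^ m * y := pow_succ y m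
        have h2 : binC z (m + 1 + 1) = binC z (m + 1) * ((z - (m + 1)) / ((m : ℝ) + 1 + 1)) := by
          have := binC_succ z (m + 1)
          push_cast at this ⊢
          convert this using 3 <;> push_cast <;> ring
        rw [h2, hy1]
        push_cast
        field_simp
        ring
    have hsum1 : Summable (fun n => -z * g n y) := hSg.mul_left _
    have hsum2 : Summable (fun n => y * g' n y) := hSg'.mul_left _
    calc (1 - y) * (∑' n, g' n y)
        = ∑' n, g' n y - y * ∑' n, g' n y := by ring
      _ = (∑' n, (-z * g n y + y * g' n y)) - y * ∑' n, g' n y := by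
          rw [hshift]
          congr 1
          exact tsum_congr fun n => hterm n
      _ = (-z * ∑' n, g n y + y * ∑' n, g' n y) - y * ∑' n, g' n y := by
          rw [Summable.tsum_add hsum1 hsum2, tsum_mul_left, tsum_mul_left]
      _ = -z * f y := by rw [hfdef]; ring
  -- h := f * (1-·)^(-z) has derivative 0 on s
  set h : ℝ → ℝ := fun y => f y * (1 - y) ^ (-z) with hhdef
  have hhder : ∀ y ∈ s, HasDerivAt h 0 y := by
    intro y hy
    have h1y : 0 < 1 - y := by
      have := hy.2
      simp only [hsdef, Set.mem_Ioo] at hy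
      linarith [hy.2, hr1]
    have hrpow : HasDerivAt (fun t : ℝ => (1 - t) ^ (-z)) (z * (1 - y) ^ (-z - 1)) y := by
      have hbase : HasDerivAt (fun t : ℝ => 1 - t) (-1) y := by
        exact (hasDerivAt_id' y).const_sub 1
      have hpow : HasDerivAt (fun t : ℝ => t ^ (-z)) (-z * (1 - y) ^ (-z - 1)) (1 - y) :=
        Real.hasDerivAt_rpow_const (Or.inl h1y.ne')
      have := hpow.comp y hbase
      exact this.congr_deriv (by ring)
    have hprod := (hder y hy).mul hrpow
    refine hprod.congr_deriv ?_
    symm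
    have hsplit : (1 - y) ^ (-z) = (1 - y) * (1 - y) ^ (-z - 1) := by
      have h2 : (1 - y) * (1 - y) ^ (-z - 1) = (1 - y) ^ ((1 : ℝ) + (-z - 1)) := by
        rw [Real.rpow_add h1y, Real.rpow_one]
      rw [h2]
      norm_num
    have hthis := hode y hy
    rw [hsplit]
    linear_combination (-((1 - y) ^ (-z - 1))) * hthis
  -- h is constant on [0, x]
  have hsub : Set.Icc (0:ℝ) x ⊆ s := by
    intro y hy
    exact ⟨by linarith [hy.1], by linarith [hy.2, hxr]⟩
  have hconst : h x = h 0 := by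
    have hcont : ContinuousOn h (Set.Icc 0 x) := fun y hy =>
      ((hhder y (hsub hy)).continuousAt).continuousWithinAt
    have hd : ∀ y ∈ Set.Ico (0:ℝ) x, HasDerivWithinAt h 0 (Set.Ici y) y := fun y hy =>
      (hhder y (hsub ⟨hy.1, hy.2.le⟩)).hasDerivWithinAt
    exact constant_of_has_deriv_right_zero hcont hd x ⟨hx0, le_refl x⟩
  -- evaluate h 0
  have hf0 : f 0 = 1 := by
    have hrfl : f 0 = ∑' n, g n 0 := rfl
    rw [hrfl, tsum_eq_single 0 ?_]
    · simp [hgdef, binC_zero]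
    · intro n hn
      simp [hgdef, zero_pow hn]
  have hh0 : h 0 = 1 := by
    rw [hhdef]
    simp [hf0]
  -- conclude
  have hx1' : 0 < 1 - x := by linarith
  have key : f x * (1 - x) ^ (-z) = 1 := hconst.trans hh0
  rw [Real.rpow_neg hx1'.le] at key
  have hne : (1 - x) ^ z ≠ 0 := (Real.rpow_pos_of_pos hx1' z).ne'
  field_simp at key
  exact key

end ODE

lemma binC_zero_left {n : ℕ} (hn : n ≠ 0) : binC 0 n = 0 := by
  rw [binC, dsc]
  have h0 : (0 : ℕ) ∈ Finset.range n := Finset.mem_range.2 (Nat.pos_of_ne_zero hn)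
  rw [Finset.prod_eq_zero h0 (by simp)]
  simp

lemma binC_value {z : ℝ} (hz : 0 ≤ z) {u : ℝ} (hu0 : 0 ≤ u) (hu1 : u ≤ 1) :
    ∑' n, binC z n * (-1) ^ n * u ^ n = (1 - u) ^ z := by
  rcases lt_or_eq_of_le hu1 with h1 | h1
  · exact binC_tsum_eq_rpow hz hu0 h1
  · subst h1
    rcases lt_or_eq_of_le hz with h0 | h0
    · have hv : ∑' n, binC z n * (-1 : ℝ) ^ n * (1:ℝ) ^ n = ∑' n, (-1 : ℝ) ^ n * binC z n := by
        apply tsum_congr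
        intro n
        ring
      rw [hv, tsum_alt_binC h0]
      rw [show (1:ℝ) - 1 = 0 by ring, Real.zero_rpow h0.ne']
    · rw [← h0]
      rw [tsum_eq_single 0 ?_]
      · simp [binC_zero]
      · intro n hn
        simp [binC_zero_left hn]

lemma summable_binC_val {z : ℝ} (hz : 0 ≤ z) {u : ℝ} (hu0 : 0 ≤ u) (hu1 : u ≤ 1) :
    Summable (fun n => binC z n * (-1) ^ n * u ^ n) := by
  rcases lt_or_eq_of_le hu1 with h1 | h1
  · exact summable_binC_geom hz h1 (by rw [abs_of_nonneg hu0])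
  · subst h1
    rcases lt_or_eq_of_le hz with h0 | h0
    · have := summable_alt_binC h0
      apply this.congr
      intro n
      ring
    · apply summable_of_ne_finset_zero (s := {0})
      intro n hn
      have hn' : n ≠ 0 := by simpa using hn
      simp [binC_zero_left hn', ← h0]

lemma summable_abs_binC_pow {z u : ℝ} (hz : 0 ≤ z) (hu0 : 0 ≤ u) (hu1 : u ≤ 1) :
    Summable (fun n => |binC z n| * u ^ n) := by
  rcases lt_or_eq_of_le hz with h0 | h0
  · apply Summable.of_nonneg_of_le (fun n => by positivity) (fun n => ?_) (summable_abs_binC h0)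
    calc |binC z n| * u ^ n ≤ |binC z n| * 1 := by
          apply mul_le_mul_of_nonneg_left (pow_le_one₀ hu0 hu1) (abs_nonneg _)
      _ = |binC z n| := mul_one _
  · apply summable_of_ne_finset_zero (s := {0})
    intro n hn
    have hn' : n ≠ 0 := by simpa using hn
    simp [binC_zero_left hn', ← h0]

lemma tsum_abs_binC_pow_le {z u : ℝ} (hz : 0 < z) (hu0 : 0 ≤ u) (hu1 : u ≤ 1) :
    ∑' n, |binC z n| * u ^ n ≤ (⌈z⌉₊ + 1) * Real.exp z + Real.exp z * (⌈z⌉₊ / z) := by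
  refine le_trans (Summable.tsum_le_tsum (fun n => ?_) (summable_abs_binC_pow hz.le hu0 hu1)
    (summable_abs_binC hz)) (tsum_abs_binC_le hz)
  calc |binC z n| * u ^ n ≤ |binC z n| * 1 := by
        apply mul_le_mul_of_nonneg_left (pow_le_one₀ hu0 hu1) (abs_nonneg _)
    _ = |binC z n| := mul_one _

lemma summable_majorant (b C : ℝ) :
    Summable (fun k : ℕ => ((k : ℝ) + C) * b ^ k / k.factorial) := by
  have h1 : Summable (fun k : ℕ => C * (b ^ k / k.factorial)) :=
    (Real.summable_pow_div_factorial b).mul_left C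
  have h2 : Summable (fun k : ℕ => (k : ℝ) * b ^ k / k.factorial) := by
    have h3 : Summable (fun k : ℕ => b * (b ^ k / k.factorial)) :=
      (Real.summable_pow_div_factorial b).mul_left b
    have h4 : Summable (fun k : ℕ => ((k + 1 : ℕ) : ℝ) * b ^ (k + 1) / (k + 1).factorial) := by
      apply h3.congr
      intro k
      rw [Nat.factorial_succ]
      push_cast
      have hk : ((k : ℝ) + 1) ≠ 0 := by positivity
      have hf : ((k.factorial : ℝ)) ≠ 0 := Nat.cast_ne_zero.2 k.factorial_ne_zero
      field_simp
      ring
    exact (summable_nat_add_iff 1).1 h4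
  have := h2.add h1
  apply this.congr
  intro k
  rw [add_mul]
  ring


theorem sfpp_pgf (α' lam t u : ℝ) (hα : α' ∈ Set.Ioo (0 : ℝ) 1) (hlam : 0 < lam)
    (ht : 0 < t) (hu : u ∈ Set.Icc (0 : ℝ) 1) :
    ∑' n : ℕ, u ^ n * sfppPMF α' lam t n
      = Real.exp (-(t * lam ^ α' * (1 - u) ^ α')) := by
  obtain ⟨hα0, hα1⟩ := hα
  obtain ⟨hu0, hu1⟩ := hu
  set a : ℝ := lam ^ α' * t with hadef
  have ha : 0 < a := mul_pos (Real.rpow_pos_of_pos hlam α') ht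
  set F : ℕ × ℕ → ℝ := fun p =>
    (-a) ^ p.2 / (p.2.factorial : ℝ) *
      (binC ((p.2 : ℝ) * α') p.1 * (-1) ^ p.1 * u ^ p.1) with hFdef
  have hznn : ∀ k : ℕ, (0:ℝ) ≤ (k : ℝ) * α' := fun k =>
    mul_nonneg (Nat.cast_nonneg k) hα0.le
  -- Step 1 : rewrite each term of the pgf series
  have hstep1 : ∀ n : ℕ, u ^ n * sfppPMF α' lam t n = ∑' k, F (n, k) := by
    intro n
    have hfac : ((n.factorial : ℕ) : ℝ) ≠ 0 := Nat.cast_ne_zero.2 n.factorial_ne_zero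
    have h1 : sfppPMF α' lam t n = (-1 : ℝ) ^ n / n.factorial *
        ∑' k : ℕ, (-a) ^ k / k.factorial * ((n.factorial : ℝ) * binC ((k : ℝ) * α') n) := by
      rw [sfppPMF]
      congr 1
      apply tsum_congr
      intro k
      congr 1
      rw [gamma_ratio _ (hznn k) n, binC]
      field_simp
    rw [h1, ← mul_assoc, ← tsum_mul_left]
    apply tsum_congr
    intro k
    rw [hFdef]
    simp only
    field_simp
  -- the absolute value of a term
  have habsF : ∀ n k : ℕ, |F (n, k)| = a ^ k / k.factorial *
      (|binC ((k : ℝ) * α') n| * u ^ n) := by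
    intro n k
    rw [hFdef]
    simp only
    rw [abs_mul, abs_mul, abs_mul, abs_div, abs_pow, abs_pow, abs_pow, abs_neg,
      abs_of_pos ha, abs_neg, abs_one, one_pow, mul_one, abs_of_nonneg hu0,
      Nat.abs_cast]
  -- Step 2 : absolute summability on ℕ × ℕ
  set C : ℝ := 3 + 1 / α' with hCdef
  have hC3 : (3:ℝ) ≤ C := by
    have : 0 < 1 / α' := by positivity
    rw [hCdef]; linarith
  set m : ℕ → ℝ := fun k => ((k : ℝ) + C) * (a * Real.exp 1) ^ k / k.factorial with hmdef
  have hrow : ∀ k : ℕ, Summable (fun n => |F (n, k)|) := by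
    intro k
    have heq : (fun n => |F (n, k)|) =
        (fun n => a ^ k / k.factorial * (|binC ((k : ℝ) * α') n| * u ^ n)) := funext fun n => habsF n k
    rw [heq]
    exact ((summable_abs_binC_pow (hznn k) hu0 hu1).mul_left _)
  have hrowsum : ∀ k : ℕ, ∑' n, |F (n, k)| ≤ m k := by
    intro k
    have heq : ∑' n, |F (n, k)| = a ^ k / k.factorial *
        ∑' n, (|binC ((k : ℝ) * α') n| * u ^ n) := by
      rw [← tsum_mul_left]
      exact tsum_congr fun n => habsF n k
    rw [heq, hmdef]
    rcases Nat.eq_zero_or_pos k with hk0 | hk1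
    · subst hk0
      have hz0 : ((0 : ℕ) : ℝ) * α' = 0 := by push_cast; ring
      have hsum1 : ∑' n, (|binC (((0:ℕ) : ℝ) * α') n| * u ^ n) = 1 := by
        rw [hz0, tsum_eq_single 0 ?_]
        · simp [binC_zero]
        · intro n hn
          simp [binC_zero_left hn]
      rw [hsum1]
      simp only [pow_zero, Nat.factorial_zero, Nat.cast_one, Nat.cast_zero]
      rw [mul_one, div_one, div_one, zero_add]
      linarith
    · set z : ℝ := (k : ℝ) * α' with hzdef
      have hk1' : (1:ℝ) ≤ (k:ℝ) := by exact_mod_cast hk1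
      have hz : 0 < z := mul_pos (by linarith) hα0
      have hzk : z ≤ (k : ℝ) := by
        rw [hzdef]
        nlinarith
      have hzα : α' ≤ z := by
        rw [hzdef]
        nlinarith
      have hM : (⌈z⌉₊ : ℝ) ≤ z + 1 := (Nat.ceil_lt_add_one hz.le).le
      have hMz : (⌈z⌉₊ : ℝ) / z ≤ 1 + 1 / α' := by
        rw [div_le_iff₀ hz]
        have h1 : 1 / z ≤ 1 / α' := by
          apply one_div_le_one_div_of_le hα0 hzα
        have h2 : (1 + 1 / z) * z = z + 1 := by field_simp
        nlinarith [hz]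
      have hS := tsum_abs_binC_pow_le hz hu0 hu1 (u := u)
      have hmain : (⌈z⌉₊ + 1) * Real.exp z + Real.exp z * (⌈z⌉₊ / z)
          ≤ Real.exp 1 ^ k * ((k : ℝ) + C) := by
        have hek : Real.exp z ≤ Real.exp 1 ^ k := by
          rw [← Real.exp_nat_mul]
          apply Real.exp_le_exp.2
          rw [mul_one]
          exact hzk
        have hA : (⌈z⌉₊ : ℝ) + 1 + ⌈z⌉₊ / z ≤ (k : ℝ) + C := by
          rw [hCdef]
          have : (⌈z⌉₊ : ℝ) ≤ (k : ℝ) + 1 := le_trans hM (by linarith)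
          linarith
        have hApos : (0:ℝ) ≤ (⌈z⌉₊ : ℝ) + 1 + ⌈z⌉₊ / z := by positivity
        calc (⌈z⌉₊ + 1) * Real.exp z + Real.exp z * (⌈z⌉₊ / z)
            = Real.exp z * ((⌈z⌉₊ : ℝ) + 1 + ⌈z⌉₊ / z) := by ring
          _ ≤ Real.exp 1 ^ k * ((k : ℝ) + C) :=
              mul_le_mul hek hA hApos (by positivity)
      calc a ^ k / k.factorial * ∑' n, (|binC z n| * u ^ n)
          ≤ a ^ k / k.factorial * ((⌈z⌉₊ + 1) * Real.exp z + Real.exp z * (⌈z⌉₊ / z)) := by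
            apply mul_le_mul_of_nonneg_left hS (by positivity)
        _ ≤ a ^ k / k.factorial * (Real.exp 1 ^ k * ((k : ℝ) + C)) := by
            apply mul_le_mul_of_nonneg_left hmain (by positivity)
        _ = ((k : ℝ) + C) * (a * Real.exp 1) ^ k / k.factorial := by
            rw [mul_pow]
            ring
  have hmsum : Summable m := summable_majorant _ _
  have hG : Summable (fun q : ℕ × ℕ => |F (q.2, q.1)|) := by
    apply (summable_prod_of_nonneg (fun q => abs_nonneg _)).2
    exact ⟨fun k => hrow k,
      Summable.of_nonneg_of_le (fun k => tsum_nonneg fun n => abs_nonneg _) hrowsum hmsum⟩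
  have hFabs : Summable (fun p : ℕ × ℕ => |F p|) := hG.prod_symm
  have hF : Summable F := hFabs.of_abs
  -- Step 3 : swap the two sums and evaluate
  have hw : (0:ℝ) ≤ 1 - u := by linarith
  calc ∑' n : ℕ, u ^ n * sfppPMF α' lam t n
      = ∑' (n : ℕ) (k : ℕ), F (n, k) := tsum_congr hstep1
    _ = ∑' (k : ℕ) (n : ℕ), F (n, k) := (Summable.tsum_comm (f := fun n k => F (n, k)) hF).symm
    _ = ∑' k : ℕ, (-(t * lam ^ α' * (1 - u) ^ α')) ^ k / k.factorial := by
        apply tsum_congr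
        intro k
        have hFnk : ∀ n : ℕ, F (n, k) = (-a) ^ k / (k.factorial : ℝ) *
            (binC ((k : ℝ) * α') n * (-1) ^ n * u ^ n) := fun n => rfl
        have h2 : ∑' n, F (n, k) = (-a) ^ k / (k.factorial : ℝ) *
            ∑' n, (binC ((k : ℝ) * α') n * (-1) ^ n * u ^ n) := by
          rw [tsum_congr hFnk, tsum_mul_left]
        rw [h2, binC_value (hznn k) hu0 hu1]
        rw [mul_comm ((k:ℝ)) α', Real.rpow_mul hw, Real.rpow_natCast]
        rw [div_mul_eq_mul_div, ← mul_pow]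
        congr 2
        rw [hadef]
        ring
    _ = Real.exp (-(t * lam ^ α' * (1 - u) ^ α')) := by
        rw [Real.exp_eq_exp_ℝ, NormedSpace.exp_eq_tsum_div]
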